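/- For all nonnegative integers n and l, f^S_{n,2l+1} = f^S_{n,2l} and f^u_{n,2l+1} = f^u_{n,2l}; i.e. for the symmetry classes S and u, the number of such symmetric permutations with longest increasing subsequence of length at most 2l+1 is the same as the number with longest increasing subsequence of length at most 2l. -/

import Mathlib

noncomputable section

/-- `lisLE π l` means the longest increasing subsequence of the permutation `π`
has length at most `l`. -/
def lisLE {N : ℕ} (π : Equiv.Perm (Fin N)) (l : ℕ) : Prop :=
  ∀ (k : ℕ) (f : Fin k → Fin N), StrictMono f → StrictMono (fun i => π (f i)) → k ≤ l

/-- `f^S_{n,l}`: the number of permutations `π` of `{1,…,2n}` with `π = ι∘π⁻¹∘ι`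
and `π(x) ≠ ι(x)` for all `x` (where `ι(x) = 2n+1-x`), whose longest increasing
subsequence has length at most `l`. -/
def fSCount (n l : ℕ) : ℕ :=
  Nat.card {π : Equiv.Perm (Fin (2 * n)) //
    π = Fin.revPerm * π⁻¹ * Fin.revPerm ∧ (∀ x, π x ≠ Fin.revPerm x) ∧ lisLE π l}

/-- `f^u_{n,l}`: the number of permutations `π` of `{1,…,4n}` with `π = π⁻¹`,
`π = ι∘π⁻¹∘ι` (where `ι(x) = 4n+1-x`), `π(x) ≠ x` and `π(x) ≠ ι(x)` for all `x`,
whose longest increasing subsequence has length at most `l`. -/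
def fuCount (n l : ℕ) : ℕ :=
  Nat.card {π : Equiv.Perm (Fin (4 * n)) //
    π = π⁻¹ ∧ π = Fin.revPerm * π⁻¹ * Fin.revPerm ∧
    (∀ x, π x ≠ x) ∧ (∀ x, π x ≠ Fin.revPerm x) ∧ lisLE π l}

lemma lisLE_of_le {N : ℕ} {π : Equiv.Perm (Fin N)} {l l' : ℕ} (h : l ≤ l')
    (hl : lisLE π l) : lisLE π l' :=
  fun k f hf hπf => (hl k f hf hπf).trans h

/-- Key lemma: for an antidiagonally-symmetric permutation with no point on the
antidiagonal, if the longest increasing subsequence has length at most `2l+1`, then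
it in fact has length at most `2l`. -/
lemma lisLE_even {N : ℕ} (π : Equiv.Perm (Fin N))
    (hsym : π = Fin.revPerm * π⁻¹ * Fin.revPerm)
    (hfp : ∀ x, π x ≠ Fin.revPerm x) (l : ℕ)
    (h : lisLE π (2 * l + 1)) : lisLE π (2 * l) := by
  intro k f hf hπf
  by_contra hk
  have hk2 : k = 2 * l + 1 := by
    have := h k f hf hπf; omega
  subst hk2
  -- the antidiagonal reflection maps the graph of π to itself
  have h0 : ∀ x : Fin N, π x = (π⁻¹ x.rev).rev := by
    intro x
    conv_lhs => rw [hsym]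
    simp [Equiv.Perm.mul_apply]
  have h1 : ∀ y : Fin N, π ((π y).rev) = y.rev := by
    intro y
    rw [h0, Fin.rev_rev, ← Equiv.Perm.mul_apply, inv_mul_cancel, Equiv.Perm.one_apply]
  -- no point of the graph is on the antidiagonal
  have hfp' : ∀ x : Fin N, x.val + (π x).val + 1 ≠ N := by
    intro x hx
    apply hfp x
    apply Fin.ext
    have h2 := x.isLt
    simp only [Fin.revPerm_apply, Fin.val_rev]
    omega
  have hmono : ∀ u v : Fin (2*l+1), u.val ≤ v.val →
      (f u).val ≤ (f v).val ∧ (π (f u)).val ≤ (π (f v)).val := by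
    intro u v huv
    exact ⟨Fin.le_def.mp (hf.monotone (Fin.le_def.mpr huv)),
      Fin.le_def.mp (hπf.monotone (Fin.le_def.mpr huv))⟩
  have hstrict : ∀ u v : Fin (2*l+1), u.val < v.val →
      (f u).val < (f v).val ∧ (π (f u)).val < (π (f v)).val := by
    intro u v huv
    exact ⟨Fin.lt_def.mp (hf (Fin.lt_def.mpr huv)),
      Fin.lt_def.mp (hπf (Fin.lt_def.mpr huv))⟩
  set m : Fin (2*l+1) := ⟨l, by omega⟩ with hm
  rcases Nat.lt_trichotomy ((f m).val + (π (f m)).val + 1) N with hc | hc | hc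
  · -- the middle point is strictly below the antidiagonal;
    -- so are all points with index ≤ l
    have hLow : ∀ u : Fin (2*l+1), u.val ≤ l → (f u).val + (π (f u)).val + 2 ≤ N := by
      intro u hu
      have h2 := hmono u m hu
      have h3 := hfp' (f u)
      omega
    set F : Fin (2*l+2) → Fin N := fun j =>
      if hj : j.val ≤ l then f ⟨j.val, by omega⟩
      else (π (f ⟨2*l+1 - j.val, by omega⟩)).rev with hF
    have hcross : ∀ u v : Fin (2*l+1), u.val ≤ l → v.val ≤ l →
        (f u).val + (π (f v)).val + 2 ≤ N := by
      intro u v hu hv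
      rcases le_total u.val v.val with h' | h'
      · have := hmono u v h'
        have := hLow v hv
        omega
      · have := hmono v u h'
        have := hLow u hu
        omega
    have hFmono : StrictMono F := by
      intro i j hij
      have hij' : i.val < j.val := hij
      have hjlt : j.val < 2*l+2 := j.isLt
      rw [Fin.lt_def]
      by_cases hj : j.val ≤ l
      · have hi : i.val ≤ l := by omega
        simp only [hF, dif_pos hi, dif_pos hj]
        exact (hstrict _ _ (by simpa using hij')).1
      · by_cases hi : i.val ≤ l
        · simp only [hF, dif_pos hi, dif_neg hj, Fin.val_rev]
          have h2 := hcross ⟨i.val, by omega⟩ ⟨2*l+1 - j.val, by omega⟩ (by simpa) (by simp; omega)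
          have h3 := (π (f ⟨2*l+1 - j.val, by omega⟩)).isLt
          omega
        · simp only [hF, dif_neg hi, dif_neg hj, Fin.val_rev]
          have h2 := (hstrict ⟨2*l+1 - j.val, by omega⟩ ⟨2*l+1 - i.val, by omega⟩ (by simp; omega)).2
          have h3 := (π (f ⟨2*l+1 - i.val, by omega⟩)).isLt
          omega
    have hπFmono : StrictMono (fun j => π (F j)) := by
      intro i j hij
      have hij' : i.val < j.val := hij
      have hjlt : j.val < 2*l+2 := j.isLt
      simp only []
      rw [Fin.lt_def]
      by_cases hj : j.val ≤ l
      · have hi : i.val ≤ l := by omega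
        simp only [hF, dif_pos hi, dif_pos hj]
        exact (hstrict _ _ (by simpa using hij')).2
      · by_cases hi : i.val ≤ l
        · simp only [hF, dif_pos hi, dif_neg hj, h1, Fin.val_rev]
          have h2 := hcross ⟨2*l+1 - j.val, by omega⟩ ⟨i.val, by omega⟩ (by simp; omega) (by simpa)
          have h3 := (f ⟨2*l+1 - j.val, by omega⟩).isLt
          omega
        · simp only [hF, dif_neg hi, dif_neg hj, h1, Fin.val_rev]
          have h2 := (hstrict ⟨2*l+1 - j.val, by omega⟩ ⟨2*l+1 - i.val, by omega⟩ (by simp; omega)).1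
          have h3 := (f ⟨2*l+1 - i.val, by omega⟩).isLt
          omega
    have := h (2*l+2) F hFmono hπFmono
    omega
  · exact hfp' (f m) hc
  · -- the middle point is strictly above the antidiagonal;
    -- so are all points with index ≥ l
    have hHigh : ∀ u : Fin (2*l+1), l ≤ u.val → N ≤ (f u).val + (π (f u)).val := by
      intro u hu
      have h2 := hmono m u hu
      have h3 := hfp' (f u)
      omega
    set F : Fin (2*l+2) → Fin N := fun j =>
      if hj : j.val ≤ l then (π (f ⟨2*l - j.val, by omega⟩)).rev
      else f ⟨j.val - 1, by omega⟩ with hF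
    have hcross : ∀ u v : Fin (2*l+1), l ≤ u.val → l ≤ v.val →
        N ≤ (f u).val + (π (f v)).val := by
      intro u v hu hv
      rcases le_total u.val v.val with h' | h'
      · have := hmono u v h'
        have := hHigh u hu
        omega
      · have := hmono v u h'
        have := hHigh v hv
        omega
    have hFmono : StrictMono F := by
      intro i j hij
      have hij' : i.val < j.val := hij
      have hjlt : j.val < 2*l+2 := j.isLt
      rw [Fin.lt_def]
      by_cases hj : j.val ≤ l
      · have hi : i.val ≤ l := by omega
        simp only [hF, dif_pos hi, dif_pos hj, Fin.val_rev]
        have h2 := (hstrict ⟨2*l - j.val, by omega⟩ ⟨2*l - i.val, by omega⟩ (by simp; omega)).2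
        have h3 := (π (f ⟨2*l - i.val, by omega⟩)).isLt
        omega
      · by_cases hi : i.val ≤ l
        · simp only [hF, dif_pos hi, dif_neg hj, Fin.val_rev]
          have h2 := hcross ⟨j.val - 1, by omega⟩ ⟨2*l - i.val, by omega⟩ (by simp; omega) (by simp; omega)
          have h3 := (π (f ⟨2*l - i.val, by omega⟩)).isLt
          omega
        · simp only [hF, dif_neg hi, dif_neg hj]
          exact (hstrict ⟨i.val - 1, by omega⟩ ⟨j.val - 1, by omega⟩ (by simp; omega)).1
    have hπFmono : StrictMono (fun j => π (F j)) := by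
      intro i j hij
      have hij' : i.val < j.val := hij
      have hjlt : j.val < 2*l+2 := j.isLt
      simp only []
      rw [Fin.lt_def]
      by_cases hj : j.val ≤ l
      · have hi : i.val ≤ l := by omega
        simp only [hF, dif_pos hi, dif_pos hj, h1, Fin.val_rev]
        have h2 := (hstrict ⟨2*l - j.val, by omega⟩ ⟨2*l - i.val, by omega⟩ (by simp; omega)).1
        have h3 := (f ⟨2*l - i.val, by omega⟩).isLt
        omega
      · by_cases hi : i.val ≤ l
        · simp only [hF, dif_pos hi, dif_neg hj, h1, Fin.val_rev]
          have h2 := hcross ⟨2*l - i.val, by omega⟩ ⟨j.val - 1, by omega⟩ (by simp; omega) (by simp; omega)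
          have h3 := (f ⟨2*l - i.val, by omega⟩).isLt
          omega
        · simp only [hF, dif_neg hi, dif_neg hj]
          exact (hstrict ⟨i.val - 1, by omega⟩ ⟨j.val - 1, by omega⟩ (by simp; omega)).2
    have := h (2*l+2) F hFmono hπFmono
    omega

/-- `f^S_{n,2l+1} = f^S_{n,2l}` and `f^u_{n,2l+1} = f^u_{n,2l}`. -/
theorem fS_fu_odd_eq_even (n l : ℕ) :
    fSCount n (2 * l + 1) = fSCount n (2 * l) ∧
    fuCount n (2 * l + 1) = fuCount n (2 * l) := by
  constructor
  · apply Nat.card_congr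
    apply Equiv.subtypeEquivRight
    intro π
    constructor
    · rintro ⟨h1, h2, h3⟩
      exact ⟨h1, h2, lisLE_even π h1 h2 l h3⟩
    · rintro ⟨h1, h2, h3⟩
      exact ⟨h1, h2, lisLE_of_le (by omega) h3⟩
  · apply Nat.card_congr
    apply Equiv.subtypeEquivRight
    intro π
    constructor
    · rintro ⟨h0, h1, h2, h2', h3⟩
      exact ⟨h0, h1, h2, h2', lisLE_even π h1 h2' l h3⟩
    · rintro ⟨h0, h1, h2, h2', h3⟩
      exact ⟨h0, h1, h2, h2', lisLE_of_le (by omega) h3⟩
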